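/- Suppose there is an R-homomorphism φ: I → R with iφ(j) = ij = φ(i)j for all i,j ∈ I. Then an ideal K ⊆ E(R,I) is prime (respectively maximal) if and only if either (1) K = A ⊕ I for some prime (respectively maximal) ideal A of R, or (2) K = {(a,-i) : i ∈ I, a ∈ R, a - φ(i) ∈ Z} for some prime (respectively maximal) ideal Z of R with φ(I) ⊄ Z. -/

import Mathlib

open MulOpposite

/-- The underlying type of the Dorroh (ideal) extension `E(R,I)`. -/
@[ext]
structure Dorroh (R : Type*) (I : Type*) where
  fst : R
  snd : I

/-- `I` is an `R`-rng: a nonunital ring with a compatible `(R,R)`-bimodule structure. -/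
class IsRRng (R I : Type*) [Ring R] [NonUnitalRing I] [Module R I] [Module Rᵐᵒᵖ I] : Prop where
  smul_op_smul : ∀ (r : R) (s : Rᵐᵒᵖ) (x : I), r • s • x = s • r • x
  smul_mul : ∀ (r : R) (x y : I), r • (x * y) = (r • x) * y
  mul_smul_eq : ∀ (r : R) (x y : I), x * (r • y) = (op r • x) * y
  op_smul_mul : ∀ (r : R) (x y : I), op r • (x * y) = x * (op r • y)

namespace Dorroh

variable {R I : Type*} [Ring R] [NonUnitalRing I] [Module R I] [Module Rᵐᵒᵖ I] [IsRRng R I]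

instance : Add (Dorroh R I) := ⟨fun p q => ⟨p.fst + q.fst, p.snd + q.snd⟩⟩
instance : Zero (Dorroh R I) := ⟨⟨0, 0⟩⟩
instance : Neg (Dorroh R I) := ⟨fun p => ⟨-p.fst, -p.snd⟩⟩
instance : Mul (Dorroh R I) :=
  ⟨fun p q => ⟨p.fst * q.fst, op q.fst • p.snd + p.fst • q.snd + p.snd * q.snd⟩⟩
instance : One (Dorroh R I) := ⟨⟨1, 0⟩⟩

set_option linter.unusedSectionVars false

@[simp] theorem add_fst (p q : Dorroh R I) : (p + q).fst = p.fst + q.fst := rfl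
@[simp] theorem add_snd (p q : Dorroh R I) : (p + q).snd = p.snd + q.snd := rfl
@[simp] theorem zero_fst : (0 : Dorroh R I).fst = 0 := rfl
@[simp] theorem zero_snd : (0 : Dorroh R I).snd = 0 := rfl
@[simp] theorem neg_fst (p : Dorroh R I) : (-p).fst = -p.fst := rfl
@[simp] theorem neg_snd (p : Dorroh R I) : (-p).snd = -p.snd := rfl
@[simp] theorem mul_fst (p q : Dorroh R I) : (p * q).fst = p.fst * q.fst := rfl
@[simp] theorem mul_snd (p q : Dorroh R I) :
    (p * q).snd = op q.fst • p.snd + p.fst • q.snd + p.snd * q.snd := rfl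
@[simp] theorem one_fst : (1 : Dorroh R I).fst = 1 := rfl
@[simp] theorem one_snd : (1 : Dorroh R I).snd = 0 := rfl

instance : Ring (Dorroh R I) where
  add_assoc a b c := by ext <;> simp [add_assoc]
  zero_add a := by ext <;> simp
  add_zero a := by ext <;> simp
  add_comm a b := by ext <;> simp [add_comm]
  neg_add_cancel a := by ext <;> simp
  mul_assoc a b c := by
    ext
    · simp [mul_assoc]
    · simp only [mul_snd, mul_fst, smul_add, mul_smul, op_mul, mul_add, add_mul,
        IsRRng.smul_mul, IsRRng.op_smul_mul, IsRRng.smul_op_smul, mul_assoc]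
      rw [← IsRRng.mul_smul_eq]
      abel
  one_mul a := by ext <;> simp
  mul_one a := by ext <;> simp
  left_distrib a b c := by
    ext
    · simp [mul_add]
    · simp [op_add, add_smul, smul_add, mul_add]
      abel
  right_distrib a b c := by
    ext
    · simp [add_mul]
    · simp [op_add, add_smul, smul_add, add_mul]
      abel
  zero_mul a := by ext <;> simp
  mul_zero a := by ext <;> simp
  nsmul := nsmulRec
  zsmul := zsmulRec

theorem mul_def (p q : Dorroh R I) :
    p * q = ⟨p.fst * q.fst, op q.fst • p.snd + p.fst • q.snd + p.snd * q.snd⟩ := rfl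

theorem one_def : (1 : Dorroh R I) = ⟨1, 0⟩ := rfl

theorem add_def (p q : Dorroh R I) : p + q = ⟨p.fst + q.fst, p.snd + q.snd⟩ := rfl

end Dorroh

/-- An `R`-subrng of the `R`-rng `I`: an `(R,R)`-subbimodule closed under multiplication. -/
def IsRSubrng (R : Type*) {I : Type*} [Ring R] [NonUnitalRing I] [Module R I]
    [Module Rᵐᵒᵖ I] (J : Set I) : Prop :=
  (0 : I) ∈ J ∧ (∀ x ∈ J, ∀ y ∈ J, x + y ∈ J) ∧ (∀ x ∈ J, -x ∈ J) ∧
    (∀ x ∈ J, ∀ y ∈ J, x * y ∈ J) ∧ (∀ (r : R), ∀ x ∈ J, r • x ∈ J) ∧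
    (∀ (r : R), ∀ x ∈ J, op r • x ∈ J)

/-- An `R`-ideal of the `R`-rng `I`: an `(R,R)`-subbimodule that is an ideal of `I`. -/
def IsRIdeal (R : Type*) {I : Type*} [Ring R] [NonUnitalRing I] [Module R I]
    [Module Rᵐᵒᵖ I] (J : Set I) : Prop :=
  IsRSubrng R J ∧ ∀ (i : I), ∀ j ∈ J, i * j ∈ J ∧ j * i ∈ J

/-- The annihilator `ann_R(I) = {r : R | rI = Ir = 0}`. -/
def annR (R I : Type*) [Ring R] [NonUnitalRing I] [Module R I] [Module Rᵐᵒᵖ I] : Set R :=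
  {r : R | ∀ x : I, r • x = 0 ∧ op r • x = 0}

/-- An element `x` of a rng is left quasi-regular if `x + k + kx = 0` for some `k`. -/
def IsLQR {I : Type*} [NonUnitalRing I] (x : I) : Prop := ∃ k : I, x + k + k * x = 0

/-- The Jacobson radical of a rng. -/
def rngRad (I : Type*) [NonUnitalRing I] : Set I := {x : I | ∀ j : I, IsLQR (j * x)}

/-- `npowNZ x n = x ^ (n+1)` in a nonunital ring. -/
def npowNZ {I : Type*} [NonUnitalRing I] (x : I) : ℕ → I
  | 0 => x
  | n + 1 => npowNZ x n * x

/-- An element of a rng is nilpotent if some positive power of it is zero. -/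
def IsNilElem {I : Type*} [NonUnitalRing I] (x : I) : Prop := ∃ n : ℕ, npowNZ x n = 0

/-- A subset of a rng is nil if each of its elements is nilpotent. -/
def SetIsNil {I : Type*} [NonUnitalRing I] (S : Set I) : Prop := ∀ x ∈ S, IsNilElem x

/-- A subset of a rng is nilpotent if for some `n` every product of `n+1` of its
elements vanishes. -/
def SetIsNilpotent {I : Type*} [NonUnitalRing I] (S : Set I) : Prop :=
  ∃ n : ℕ, ∀ (x : I) (l : List I), x ∈ S → (∀ y ∈ l, y ∈ S) → l.length = n →
    l.foldl (· * ·) x = 0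

/-- The upper nil radical of a rng: the sum of all of its nil (two-sided) ideals. -/
def upperNil (I : Type*) [NonUnitalRing I] : Set I :=
  ((sSup {J : TwoSidedIdeal I | ∀ x ∈ J, IsNilElem x} : TwoSidedIdeal I) : Set I)

/-- A rng is semiprime if it has no nonzero ideal of square zero. -/
def IsSemiprimeRng (I : Type*) [NonUnitalRing I] : Prop :=
  ∀ J : TwoSidedIdeal I, (∀ x ∈ J, ∀ y ∈ J, x * y = 0) → J = ⊥

/-- A rng is prime if the product of any two nonzero ideals is nonzero. -/
def IsPrimeRng (I : Type*) [NonUnitalRing I] : Prop :=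
  ∀ J K : TwoSidedIdeal I, (∀ x ∈ J, ∀ y ∈ K, x * y = 0) → J = ⊥ ∨ K = ⊥

/-- `ψ : I → R` restricts to an `R`-homomorphism on the subset `J ⊆ I`. -/
def IsRHomOn (R : Type*) {I : Type*} [Ring R] [NonUnitalRing I] [Module R I]
    [Module Rᵐᵒᵖ I] (J : Set I) (ψ : I → R) : Prop :=
  (∀ x ∈ J, ∀ y ∈ J, ψ (x + y) = ψ x + ψ y) ∧
    (∀ x ∈ J, ∀ y ∈ J, ψ (x * y) = ψ x * ψ y) ∧
    (∀ (r : R), ∀ x ∈ J, ψ (r • x) = r * ψ x) ∧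
    (∀ (r : R), ∀ x ∈ J, ψ (op r • x) = ψ x * r)

/-- `φ : I → R` is an `R`-homomorphism. -/
def IsRHom (R : Type*) {I : Type*} [Ring R] [NonUnitalRing I] [Module R I]
    [Module Rᵐᵒᵖ I] (φ : I → R) : Prop :=
  (∀ x y : I, φ (x + y) = φ x + φ y) ∧ (∀ x y : I, φ (x * y) = φ x * φ y) ∧
    (∀ (r : R) (x : I), φ (r • x) = r * φ x) ∧ (∀ (r : R) (x : I), φ (op r • x) = φ x * r)

/-- A two-sided ideal `P` of a ring is prime if `AB ⊆ P` implies `A ⊆ P` or `B ⊆ P`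
for all two-sided ideals `A`, `B`. -/
def TsiPrime {S : Type*} [Ring S] (P : TwoSidedIdeal S) : Prop :=
  ∀ A B : TwoSidedIdeal S, (∀ a ∈ A, ∀ b ∈ B, a * b ∈ P) → A ≤ P ∨ B ≤ P

/-- A two-sided ideal is maximal if it is a maximal proper ideal. -/
def TsiMaximal {S : Type*} [Ring S] (P : TwoSidedIdeal S) : Prop :=
  P ≠ ⊤ ∧ ∀ Q : TwoSidedIdeal S, P ≤ Q → Q = P ∨ Q = ⊤

/-- A two-sided-ideal subset of a ring. -/
def IsTwoSidedIdealSet (R : Type*) [Ring R] (P : Set R) : Prop :=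
  (0 : R) ∈ P ∧ (∀ x ∈ P, ∀ y ∈ P, x + y ∈ P) ∧ (∀ x ∈ P, -x ∈ P) ∧
    (∀ (r : R), ∀ x ∈ P, r * x ∈ P ∧ x * r ∈ P)

/-- A subset `P` of `R` is a prime ideal if it is a two-sided ideal and `AB ⊆ P`
implies `A ⊆ P` or `B ⊆ P` for all two-sided ideals `A, B`. -/
def IsPrimeIdealSet (R : Type*) [Ring R] (P : Set R) : Prop :=
  IsTwoSidedIdealSet R P ∧ ∀ A B : TwoSidedIdeal R,
    (∀ a ∈ A, ∀ b ∈ B, a * b ∈ P) → ((A : Set R) ⊆ P ∨ (B : Set R) ⊆ P)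

/-- A subset `P` of `R` is a semiprime ideal if it is a two-sided ideal and `A² ⊆ P`
implies `A ⊆ P` for all two-sided ideals `A`. -/
def IsSemiprimeIdealSet (R : Type*) [Ring R] (P : Set R) : Prop :=
  IsTwoSidedIdealSet R P ∧ ∀ A : TwoSidedIdeal R,
    (∀ a ∈ A, ∀ b ∈ A, a * b ∈ P) → (A : Set R) ⊆ P

section IdealData

variable (R I : Type*) [Ring R] [NonUnitalRing I] [Module R I] [Module Rᵐᵒᵖ I] [IsRRng R I]

/-- The data describing an ideal of `E(R,I)`: ideals `Z ⊆ A` of `R`, an `R`-subrng `J ⊆ I`,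
and a surjective `R`-homomorphism `φ : J → A/Z` (represented by a set-map `ψ : I → R`
choosing representatives), satisfying conditions (a) `ai - ji ∈ ker φ` and
(b) `ia - ij ∈ ker φ` for all `(a,-j) ∈ K`, `i ∈ I`. -/
def DorrohIdealData (A Z : TwoSidedIdeal R) (J : Set I) (ψ : I → R) : Prop :=
  Z ≤ A ∧ IsRSubrng R J ∧
    (∀ x ∈ J, ∀ y ∈ J, ψ (x + y) - (ψ x + ψ y) ∈ Z) ∧
    (∀ x ∈ J, ∀ y ∈ J, ψ (x * y) - ψ x * ψ y ∈ Z) ∧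
    (∀ (r : R), ∀ x ∈ J, ψ (r • x) - r * ψ x ∈ Z) ∧
    (∀ (r : R), ∀ x ∈ J, ψ (op r • x) - ψ x * r ∈ Z) ∧
    (∀ j ∈ J, ψ j ∈ A) ∧
    (∀ a ∈ A, ∃ j ∈ J, a - ψ j ∈ Z) ∧
    (∀ (a : R), ∀ j ∈ J, a ∈ A → a - ψ j ∈ Z → ∀ i : I,
      (a • i - j * i ∈ J ∧ ψ (a • i - j * i) ∈ Z) ∧
      (op a • i - i * j ∈ J ∧ ψ (op a • i - i * j) ∈ Z))

/-- The subset `K = {(a, -j) : a ∈ A, j ∈ J, a + Z = φ(j)}` of `E(R,I)`. -/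
def DorrohIdealSet (A Z : TwoSidedIdeal R) (J : Set I) (ψ : I → R) : Set (Dorroh R I) :=
  {p : Dorroh R I | p.fst ∈ A ∧ -p.snd ∈ J ∧ p.fst - ψ (-p.snd) ∈ Z}

end IdealData

namespace DorrohAux

open TwoSidedIdeal

variable {S T : Type*} [Ring S] [Ring T]

/-- The kernel of a ring homomorphism, as a two-sided ideal. -/
def rhKer (f : S →+* T) : TwoSidedIdeal S :=
  TwoSidedIdeal.mk' {x | f x = 0}
    (map_zero f)
    (by intro x y hx hy; simp only [Set.mem_setOf_eq, map_add] at *; rw [hx, hy, add_zero])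
    (by intro x hx; simp only [Set.mem_setOf_eq, map_neg] at *; rw [hx, neg_zero])
    (by intro x y hy; simp only [Set.mem_setOf_eq, map_mul] at *; rw [hy, mul_zero])
    (by intro x y hx; simp only [Set.mem_setOf_eq, map_mul] at *; rw [hx, zero_mul])

lemma mem_rhKer {f : S →+* T} {x : S} : x ∈ rhKer f ↔ f x = 0 :=
  mem_mk' _ _ _ _ _ _ _

/-- The image of a two-sided ideal under a surjective ring homomorphism. -/
def imgIdeal (f : S →+* T) (hf : Function.Surjective f) (J : TwoSidedIdeal S) :
    TwoSidedIdeal T :=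
  TwoSidedIdeal.mk' (f '' J)
    ⟨0, J.zero_mem, map_zero f⟩
    (by rintro _ _ ⟨x, hx, rfl⟩ ⟨y, hy, rfl⟩; exact ⟨x + y, J.add_mem hx hy, map_add f x y⟩)
    (by rintro _ ⟨x, hx, rfl⟩; exact ⟨-x, J.neg_mem hx, map_neg f x⟩)
    (by rintro r _ ⟨x, hx, rfl⟩
        obtain ⟨s, rfl⟩ := hf r
        exact ⟨s * x, J.mul_mem_left s x hx, map_mul f s x⟩)
    (by rintro _ r ⟨x, hx, rfl⟩
        obtain ⟨s, rfl⟩ := hf r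
        exact ⟨x * s, J.mul_mem_right x s hx, map_mul f x s⟩)

lemma mem_imgIdeal {f : S →+* T} {hf : Function.Surjective f} {J : TwoSidedIdeal S}
    {y : T} : y ∈ imgIdeal f hf J ↔ ∃ x ∈ J, f x = y := by
  rw [show y ∈ imgIdeal f hf J ↔ y ∈ f '' (J : Set S) from mem_mk' _ _ _ _ _ _ _]
  constructor
  · rintro ⟨x, hx, rfl⟩; exact ⟨x, hx, rfl⟩
  · rintro ⟨x, hx, rfl⟩; exact ⟨x, hx, rfl⟩

/-- Every maximal two-sided ideal is prime. -/
lemma maximal_prime {K : TwoSidedIdeal S} (h : TsiMaximal K) : TsiPrime K := by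
  intro A B hAB
  by_contra hc
  push_neg at hc
  obtain ⟨hA, hB⟩ := hc
  have key : ∀ C : TwoSidedIdeal S, (¬ C ≤ K) → ∃ k ∈ K, ∃ c ∈ C, k + c = 1 := by
    intro C hC
    rw [TwoSidedIdeal.le_iff, Set.not_subset] at hC
    obtain ⟨c₀, hc₀, hc₀K⟩ := hC
    set Q : TwoSidedIdeal S := TwoSidedIdeal.mk'
        {x | ∃ k ∈ K, ∃ c ∈ C, x = k + c}
        ⟨0, K.zero_mem, 0, C.zero_mem, by rw [add_zero]⟩
        (by rintro _ _ ⟨k, hk, c, hc, rfl⟩ ⟨k', hk', c', hc', rfl⟩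
            exact ⟨k + k', K.add_mem hk hk', c + c', C.add_mem hc hc', by abel⟩)
        (by rintro _ ⟨k, hk, c, hc, rfl⟩
            exact ⟨-k, K.neg_mem hk, -c, C.neg_mem hc, by abel⟩)
        (by rintro x _ ⟨k, hk, c, hc, rfl⟩
            exact ⟨x * k, K.mul_mem_left x k hk, x * c, C.mul_mem_left x c hc, by noncomm_ring⟩)
        (by rintro _ x ⟨k, hk, c, hc, rfl⟩
            exact ⟨k * x, K.mul_mem_right k x hk, c * x, C.mul_mem_right c x hc, by noncomm_ring⟩)
        with hQdef
    have hKQ : K ≤ Q := by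
      intro k hk
      rw [hQdef, mem_mk']
      exact ⟨k, hk, 0, C.zero_mem, by rw [add_zero]⟩
    rcases h.2 Q hKQ with heq | heq
    · exfalso
      apply hc₀K
      have : c₀ ∈ Q := by
        rw [hQdef, mem_mk']
        exact ⟨0, K.zero_mem, c₀, hc₀, by rw [zero_add]⟩
      rw [heq] at this
      exact this
    · have h1 : (1 : S) ∈ Q := by rw [heq]; trivial
      rw [hQdef, mem_mk'] at h1
      obtain ⟨k, hk, c, hc, h1⟩ := h1
      exact ⟨k, hk, c, hc, h1.symm⟩
  obtain ⟨m, hm, a, ha, hma⟩ := key A hA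
  obtain ⟨m', hm', b, hb, hmb⟩ := key B hB
  have hX : m * m' + m * b + a * m' + a * b ∈ K :=
    K.add_mem (K.add_mem (K.add_mem (K.mul_mem_right m m' hm) (K.mul_mem_right m b hm))
      (K.mul_mem_left a m' hm')) (hAB a ha b hb)
  have e : (1 : S) = m * m' + m * b + a * m' + a * b := by
    calc (1 : S) = (m + a) * (m' + b) := by rw [hma, hmb, one_mul]
    _ = m * m' + m * b + a * m' + a * b := by noncomm_ring
  rw [← e] at hX
  exact h.1 (K.eq_top hX)

/-- Primality and maximality pull back along surjective ring homomorphisms. -/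
lemma preimage_prime_maximal (f : S →+* T) (hf : Function.Surjective f)
    (A : TwoSidedIdeal T) (K : TwoSidedIdeal S) (hK : ∀ x, x ∈ K ↔ f x ∈ A) :
    (TsiPrime A → TsiPrime K) ∧ (TsiMaximal A → TsiMaximal K) := by
  constructor
  · intro hA A' B' hprod
    rcases hA (imgIdeal f hf A') (imgIdeal f hf B') (by
      rintro a ha b hb
      rw [mem_imgIdeal] at ha hb
      obtain ⟨x, hx, rfl⟩ := ha
      obtain ⟨y, hy, rfl⟩ := hb
      rw [← map_mul]
      exact (hK _).1 (hprod x hx y hy)) with h | h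
    · left; intro x hx
      exact (hK x).2 (h (mem_imgIdeal.2 ⟨x, hx, rfl⟩))
    · right; intro x hx
      exact (hK x).2 (h (mem_imgIdeal.2 ⟨x, hx, rfl⟩))
  · intro hA
    constructor
    · intro hKtop
      have h1 : (1 : S) ∈ K := by rw [hKtop]; trivial
      have h2 : f 1 ∈ A := (hK 1).1 h1
      rw [map_one] at h2
      exact hA.1 (A.eq_top h2)
    · intro Q hQ
      have hAimg : A ≤ imgIdeal f hf Q := by
        intro a ha
        obtain ⟨x, rfl⟩ := hf a
        exact mem_imgIdeal.2 ⟨x, hQ ((hK x).2 ha), rfl⟩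
      rcases hA.2 (imgIdeal f hf Q) hAimg with h | h
      · left
        refine le_antisymm (fun x hx => ?_) hQ
        have : f x ∈ A := h ▸ (mem_imgIdeal.2 ⟨x, hx, rfl⟩)
        exact (hK x).2 this
      · right
        have h1 : (1 : T) ∈ imgIdeal f hf Q := by rw [h]; trivial
        obtain ⟨y, hy, hy1⟩ := mem_imgIdeal.1 h1
        have hsub : (1 : S) - y ∈ K :=
          (hK _).2 (by rw [map_sub, hy1, map_one, sub_self]; exact A.zero_mem)
        have h1Q : (1 : S) ∈ Q := by
          have h2 := Q.add_mem (hQ hsub) hy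
          have e : (1 : S) - y + y = 1 := by noncomm_ring
          rwa [e] at h2
        exact Q.eq_top h1Q

/-- Primality and maximality push forward along surjective ring homomorphisms whose
kernel lies in the ideal. -/
lemma image_prime_maximal (f : S →+* T) (hf : Function.Surjective f)
    (K : TwoSidedIdeal S) (hker : ∀ x, f x = 0 → x ∈ K) :
    ∃ A : TwoSidedIdeal T, (∀ x, x ∈ K ↔ f x ∈ A) ∧
      (TsiPrime K → TsiPrime A) ∧ (TsiMaximal K → TsiMaximal A) := by
  have hmem : ∀ x, x ∈ K ↔ f x ∈ imgIdeal f hf K := by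
    intro x
    constructor
    · exact fun hx => mem_imgIdeal.2 ⟨x, hx, rfl⟩
    · intro hx
      obtain ⟨y, hy, hyx⟩ := mem_imgIdeal.1 hx
      have h1 : x - y ∈ K := hker _ (by rw [map_sub, hyx, sub_self])
      have h2 := K.add_mem h1 hy
      have e : x - y + y = x := by noncomm_ring
      rwa [e] at h2
  refine ⟨imgIdeal f hf K, hmem, ?_, ?_⟩
  · intro hK A' B' hprod
    rcases hK (A'.comap f) (B'.comap f) (fun x hx y hy => (hmem _).2 (by
        rw [map_mul]
        exact hprod _ ((TwoSidedIdeal.mem_comap f).1 hx) _ ((TwoSidedIdeal.mem_comap f).1 hy)))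
      with h | h
    · left; intro a ha
      obtain ⟨x, rfl⟩ := hf a
      exact (hmem x).1 (h ((TwoSidedIdeal.mem_comap f).2 ha))
    · right; intro a ha
      obtain ⟨x, rfl⟩ := hf a
      exact (hmem x).1 (h ((TwoSidedIdeal.mem_comap f).2 ha))
  · intro hK
    refine ⟨?_, ?_⟩
    · intro htop
      have h1 : (1 : T) ∈ imgIdeal f hf K := by rw [htop]; trivial
      have h2 : (1 : S) ∈ K := (hmem 1).2 (by rwa [map_one])
      exact hK.1 (K.eq_top h2)
    · intro B hB
      have hKle : K ≤ B.comap f :=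
        fun x hx => (TwoSidedIdeal.mem_comap f).2 (hB ((hmem x).1 hx))
      rcases hK.2 (B.comap f) hKle with h | h
      · left
        refine le_antisymm (fun b hb => ?_) hB
        obtain ⟨x, rfl⟩ := hf b
        have : x ∈ K := h ▸ (TwoSidedIdeal.mem_comap f).2 hb
        exact (hmem x).1 this
      · right
        have h1 : (1 : S) ∈ B.comap f := by rw [h]; trivial
        have h2 : f 1 ∈ B := (TwoSidedIdeal.mem_comap f).1 h1
        rw [map_one] at h2
        exact B.eq_top h2

end DorrohAux

variable (R I : Type*) [Ring R] [NonUnitalRing I] [Module R I] [Module Rᵐᵒᵖ I] [IsRRng R I]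

open MulOpposite


/-- The projection `E(R,I) → R`, `(a,i) ↦ a`. -/
def dorrohPi : Dorroh R I →+* R where
  toFun p := p.fst
  map_one' := rfl
  map_mul' _ _ := rfl
  map_zero' := rfl
  map_add' _ _ := rfl

/-- The homomorphism `E(R,I) → R`, `(a,i) ↦ a + φ i`, for an `R`-homomorphism `φ`. -/
def dorrohChi (φ : I → R) (hφ : IsRHom R φ) : Dorroh R I →+* R where
  toFun p := p.fst + φ p.snd
  map_one' := by
    have h0 : φ 0 = 0 := by have := hφ.2.2.1 0 0; simpa using this
    simp [h0]
  map_mul' p q := by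
    obtain ⟨hadd, hmul, hsmul, hopsmul⟩ := hφ
    simp only [Dorroh.mul_fst, Dorroh.mul_snd]
    rw [hadd, hadd, hmul, hsmul, hopsmul]
    noncomm_ring
  map_zero' := by
    have h0 : φ 0 = 0 := by have := hφ.2.2.1 0 0; simpa using this
    simp [h0]
  map_add' p q := by
    simp only [Dorroh.add_fst, Dorroh.add_snd]
    rw [hφ.1]
    abel

/-- If there is an `R`-homomorphism `φ : I → R` with `iφ(j) = ij = φ(i)j`, then an ideal
`K` of `E(R,I)` is prime (resp. maximal) iff `K = A ⊕ I` for a prime (resp. maximal)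
ideal `A` of `R`, or `K = {(a,-i) : a - φ(i) ∈ Z}` for a prime (resp. maximal) ideal `Z`
of `R` with `φ(I) ⊄ Z`. -/
theorem dorroh_prime_maximal_ideals (φ : I → R) (hφ : IsRHom R φ)
    (hcomp : ∀ i j : I, op (φ j) • i = i * j ∧ φ i • j = i * j)
    (K : TwoSidedIdeal (Dorroh R I)) :
    (TsiPrime K ↔
      ((∃ A : TwoSidedIdeal R, TsiPrime A ∧
          (K : Set (Dorroh R I)) = {p : Dorroh R I | p.fst ∈ A}) ∨
        (∃ Z : TwoSidedIdeal R, TsiPrime Z ∧ (¬ ∀ i : I, φ i ∈ Z) ∧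
          (K : Set (Dorroh R I)) = {p : Dorroh R I | p.fst - φ (-p.snd) ∈ Z}))) ∧
    (TsiMaximal K ↔
      ((∃ A : TwoSidedIdeal R, TsiMaximal A ∧
          (K : Set (Dorroh R I)) = {p : Dorroh R I | p.fst ∈ A}) ∨
        (∃ Z : TwoSidedIdeal R, TsiMaximal Z ∧ (¬ ∀ i : I, φ i ∈ Z) ∧
          (K : Set (Dorroh R I)) = {p : Dorroh R I | p.fst - φ (-p.snd) ∈ Z}))) := by
  have hphi0 : φ 0 = 0 := by have := hφ.2.2.1 0 0; simpa using this
  set π := dorrohPi R I with hπdef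
  set χ := dorrohChi R I φ hφ with hχdef
  have hπsurj : Function.Surjective π := fun a => ⟨⟨a, 0⟩, rfl⟩
  have hχsurj : Function.Surjective χ := fun a => ⟨⟨a, 0⟩, by
    show a + φ 0 = a
    rw [hphi0, add_zero]⟩
  have hneg : ∀ x : I, φ (-x) = -φ x := by
    intro x
    have := hφ.2.2.1 (-1 : R) x
    simpa using this
  have hχapp : ∀ p : Dorroh R I, χ p = p.fst + φ p.snd := fun p => rfl
  have hπapp : ∀ p : Dorroh R I, π p = p.fst := fun p => rfl
  have hχform : ∀ p : Dorroh R I, p.fst - φ (-p.snd) = χ p := by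
    intro p
    rw [hχapp, hneg, sub_neg_eq_add]
  have hker : TsiPrime K →
      (∀ p : Dorroh R I, π p = 0 → p ∈ K) ∨ (∀ p : Dorroh R I, χ p = 0 → p ∈ K) := by
    intro hp
    have hprod : ∀ a ∈ DorrohAux.rhKer π, ∀ b ∈ DorrohAux.rhKer χ, a * b ∈ K := by
      intro a ha b hb
      rw [DorrohAux.mem_rhKer] at ha hb
      rw [hπapp] at ha
      rw [hχapp] at hb
      have hbf : b.fst = -φ b.snd := eq_neg_of_add_eq_zero_left hb
      have hab : a * b = 0 := by
        ext
        · show a.fst * b.fst = 0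
          rw [ha, zero_mul]
        · show op b.fst • a.snd + a.fst • b.snd + a.snd * b.snd = 0
          rw [hbf, ha, zero_smul, op_neg, neg_smul, (hcomp a.snd b.snd).1]
          abel
      rw [hab]
      exact K.zero_mem
    rcases hp (DorrohAux.rhKer π) (DorrohAux.rhKer χ) hprod with h | h
    · left; exact fun p h0 => h (DorrohAux.mem_rhKer.2 h0)
    · right; exact fun p h0 => h (DorrohAux.mem_rhKer.2 h0)
  have hmain : TsiPrime K →
      ((∃ A : TwoSidedIdeal R, (TsiPrime K → TsiPrime A) ∧ (TsiMaximal K → TsiMaximal A) ∧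
          (K : Set (Dorroh R I)) = {p : Dorroh R I | p.fst ∈ A}) ∨
        (∃ Z : TwoSidedIdeal R, (TsiPrime K → TsiPrime Z) ∧ (TsiMaximal K → TsiMaximal Z) ∧
          (¬ ∀ i : I, φ i ∈ Z) ∧
          (K : Set (Dorroh R I)) = {p : Dorroh R I | p.fst - φ (-p.snd) ∈ Z})) := by
    intro hp
    rcases hker hp with h | h
    · obtain ⟨A, hmem, hP, hM⟩ := DorrohAux.image_prime_maximal π hπsurj K h
      left
      refine ⟨A, hP, hM, Set.ext fun p => ?_⟩
      rw [SetLike.mem_coe, hmem p, hπapp, Set.mem_setOf_eq]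
    · obtain ⟨Z, hmem, hP, hM⟩ := DorrohAux.image_prime_maximal χ hχsurj K h
      by_cases hall : ∀ i : I, φ i ∈ Z
      · left
        refine ⟨Z, hP, hM, Set.ext fun p => ?_⟩
        rw [SetLike.mem_coe, hmem p, hχapp, Set.mem_setOf_eq]
        constructor
        · intro h'
          have h2 := Z.sub_mem h' (hall p.snd)
          have e : p.fst + φ p.snd - φ p.snd = p.fst := by noncomm_ring
          rwa [e] at h2
        · intro h'
          exact Z.add_mem h' (hall p.snd)
      · right
        refine ⟨Z, hP, hM, hall, Set.ext fun p => ?_⟩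
        rw [SetLike.mem_coe, hmem p, Set.mem_setOf_eq, hχform p]
  have hback : ∀ A : TwoSidedIdeal R,
      (K : Set (Dorroh R I)) = {p : Dorroh R I | p.fst ∈ A} →
      (TsiPrime A → TsiPrime K) ∧ (TsiMaximal A → TsiMaximal K) := by
    intro A hset
    refine DorrohAux.preimage_prime_maximal π hπsurj A K fun x => ?_
    have h1 := Set.ext_iff.1 hset x
    rw [SetLike.mem_coe, Set.mem_setOf_eq] at h1
    rw [h1, hπapp]
  have hbackχ : ∀ Z : TwoSidedIdeal R,
      (K : Set (Dorroh R I)) = {p : Dorroh R I | p.fst - φ (-p.snd) ∈ Z} →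
      (TsiPrime Z → TsiPrime K) ∧ (TsiMaximal Z → TsiMaximal K) := by
    intro Z hset
    refine DorrohAux.preimage_prime_maximal χ hχsurj Z K fun x => ?_
    have h1 := Set.ext_iff.1 hset x
    rw [SetLike.mem_coe, Set.mem_setOf_eq] at h1
    rw [h1, hχform x]
  constructor
  · constructor
    · intro hp
      rcases hmain hp with ⟨A, hP, _, hset⟩ | ⟨Z, hP, _, hnall, hset⟩
      · exact Or.inl ⟨A, hP hp, hset⟩
      · exact Or.inr ⟨Z, hP hp, hnall, hset⟩
    · rintro (⟨A, hA, hset⟩ | ⟨Z, hZ, _, hset⟩)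
      · exact (hback A hset).1 hA
      · exact (hbackχ Z hset).1 hZ
  · constructor
    · intro hm
      have hp := DorrohAux.maximal_prime hm
      rcases hmain hp with ⟨A, _, hM, hset⟩ | ⟨Z, _, hM, hnall, hset⟩
      · exact Or.inl ⟨A, hM hm, hset⟩
      · exact Or.inr ⟨Z, hM hm, hnall, hset⟩
    · rintro (⟨A, hA, hset⟩ | ⟨Z, hZ, _, hset⟩)
      · exact (hback A hset).2 hA
      · exact (hbackχ Z hset).2 hZ
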